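/- In PSL₂(ℂ) with MAN⁻N coordinates, if (m_θ a_t n⁻_w n_z)·(m_{θ₁} a_{t₁} n⁻_{w₁} n_{z₁}) = m_{θ₀} a_{t₀} n⁻_{w₀} n_{z₀}, then t₀ = t + t₁ + 2·log|1 + e^{−t₁−2iθ₁} w₁ z| and z₀ = e^{−t₁−2iθ₁} z (1 + e^{−t₁−2iθ₁} w₁ z)^{−1} + z₁, provided 1 + e^{−t₁−2iθ₁} w₁ z ≠ 0. -/

import Mathlib

open Matrix

noncomputable def Mm (θ : ℝ) : Matrix (Fin 2) (Fin 2) ℂ :=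
  !![Complex.exp (θ * Complex.I), 0; 0, Complex.exp (-(θ * Complex.I))]

noncomputable def Am (t : ℝ) : Matrix (Fin 2) (Fin 2) ℂ :=
  !![(Real.exp (t / 2) : ℂ), 0; 0, (Real.exp (-t / 2) : ℂ)]

def Nm (z : ℂ) : Matrix (Fin 2) (Fin 2) ℂ := !![1, z; 0, 1]

def Nminus (w : ℂ) : Matrix (Fin 2) (Fin 2) ℂ := !![1, 0; w, 1]

/-- `MAN⁻N` multiplication formula: the `A`-component `t₀` and `N`-component `z₀` of the
product `(m_θ a_t n⁻_w n_z)(m_{θ₁} a_{t₁} n⁻_{w₁} n_{z₁})`. -/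
theorem stmt_10 (θ θ₁ θ₀ t t₁ t₀ : ℝ) (z z₁ z₀ w w₁ w₀ : ℂ)
    (hne : 1 + Complex.exp (-(t₁ : ℂ) - 2 * (θ₁ : ℂ) * Complex.I) * w₁ * z ≠ 0)
    (heq : (Mm θ * Am t * Nminus w * Nm z) * (Mm θ₁ * Am t₁ * Nminus w₁ * Nm z₁)
        = Mm θ₀ * Am t₀ * Nminus w₀ * Nm z₀) :
    t₀ = t + t₁ + 2 * Real.log (‖
        (1 + Complex.exp (-(t₁ : ℂ) - 2 * (θ₁ : ℂ) * Complex.I) * w₁ * z)‖) ∧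
    z₀ = Complex.exp (-(t₁ : ℂ) - 2 * (θ₁ : ℂ) * Complex.I) * z *
        (1 + Complex.exp (-(t₁ : ℂ) - 2 * (θ₁ : ℂ) * Complex.I) * w₁ * z)⁻¹ + z₁ := by
  set k : ℂ := Complex.exp (-(t₁ : ℂ) - 2 * (θ₁ : ℂ) * Complex.I) with hkdef
  have h00 := congrFun (congrFun heq 0) 0
  have h01 := congrFun (congrFun heq 0) 1
  simp [Mm, Am, Nm, Nminus, Matrix.mul_apply, Fin.sum_univ_two] at h00 h01
  have hk : Complex.exp (-((θ₁:ℂ) * Complex.I)) * Complex.exp (-(t₁:ℂ) / 2)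
      = Complex.exp ((θ₁:ℂ) * Complex.I) * Complex.exp ((t₁:ℂ) / 2) * k := by
    rw [hkdef, ← Complex.exp_add, ← Complex.exp_add, ← Complex.exp_add]
    ring_nf
  have h00' : Complex.exp ((θ₀:ℂ) * Complex.I) * Complex.exp ((t₀:ℂ) / 2)
      = Complex.exp ((θ:ℂ) * Complex.I) * Complex.exp ((t:ℂ) / 2)
        * (Complex.exp ((θ₁:ℂ) * Complex.I) * Complex.exp ((t₁:ℂ) / 2))
        * (1 + k * w₁ * z) := by
    rw [← h00]
    rw [show (-(t₁:ℂ)/2) = -((t₁:ℂ))/2 by ring] at hk ⊢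
    rw [hk]; ring
  constructor
  · have habs := congrArg (fun x : ℂ => ‖x‖) h00'
    simp only [norm_mul, Complex.norm_exp] at habs
    simp at habs
    have hlog := congrArg Real.log habs
    rw [Real.log_exp, Real.log_mul, Real.log_mul (Real.exp_ne_zero _) (Real.exp_ne_zero _),
      Real.log_exp, Real.log_exp] at hlog
    · linarith
    · exact mul_ne_zero (Real.exp_ne_zero _) (Real.exp_ne_zero _)
    · simpa using hne
  · have h01' : Complex.exp ((θ₀:ℂ) * Complex.I) * Complex.exp ((t₀:ℂ) / 2) * z₀
      = Complex.exp ((θ:ℂ) * Complex.I) * Complex.exp ((t:ℂ) / 2)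
        * (Complex.exp ((θ₁:ℂ) * Complex.I) * Complex.exp ((t₁:ℂ) / 2))
        * (z₁ * (1 + k * w₁ * z) + k * z) := by
      rw [← h01]
      rw [show (-(t₁:ℂ)/2) = -((t₁:ℂ))/2 by ring] at hk ⊢
      rw [hk]; ring
    rw [h00'] at h01'
    have hA : Complex.exp ((θ:ℂ) * Complex.I) * Complex.exp ((t:ℂ) / 2)
        * (Complex.exp ((θ₁:ℂ) * Complex.I) * Complex.exp ((t₁:ℂ) / 2)) ≠ 0 := by
      apply mul_ne_zero (mul_ne_zero (Complex.exp_ne_zero _) (Complex.exp_ne_zero _))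
        (mul_ne_zero (Complex.exp_ne_zero _) (Complex.exp_ne_zero _))
    have h2 : (1 + k * w₁ * z) * z₀ = z₁ * (1 + k * w₁ * z) + k * z := by
      apply mul_left_cancel₀ hA
      linear_combination h01'
    rw [← sub_eq_iff_eq_add, eq_comm, mul_inv_eq_iff_eq_mul₀ hne]
    linear_combination (-1 : ℂ) * h2
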